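/- For every computable order h : ℕ → ℕ, Solovay's function α satisfies α(n) ≤ h(n) + O(1); in particular α grows more slowly (up to a constant) than every computable order. -/

import Mathlib

open Set Filter

namespace KC

/-- Length of the binary string identified with the natural number `n`. -/
def len (n : ℕ) : ℕ := Nat.log 2 (n + 1)

/-- Complexity of `x` relative to machine `T`. -/
noncomputable def MachineCplx (T : ℕ →. ℕ) (x : ℕ) : ℕ := sInf {n | ∃ y, len y = n ∧ x ∈ T y}

/-- `U` is an optimal machine. -/
def Optimal (U : ℕ →. ℕ) : Prop :=
  Partrec U ∧ ∀ T : ℕ →. ℕ, Partrec T → ∃ c, ∀ x y, x ∈ T y → MachineCplx U x ≤ len y + c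

/-- Conditional complexity of `x` given `y` relative to machine `T`. -/
noncomputable def CondCplx (T : ℕ →. ℕ) (x y : ℕ) : ℕ :=
  sInf {n | ∃ z, len z = n ∧ x ∈ T (Nat.pair z y)}

/-- `U` is optimal as a conditional machine. -/
def CondOptimal (U : ℕ →. ℕ) : Prop :=
  Partrec U ∧ ∀ T : ℕ →. ℕ, Partrec T →
    ∃ c, ∀ x y z, x ∈ T (Nat.pair z y) → CondCplx U x y ≤ len z + c

/-- `y` is a prefix of `z` (as binary strings identified with naturals). -/
def IsPrefix (y z : ℕ) : Prop := ∃ k, (y + 1) * 2 ^ k ≤ z + 1 ∧ z + 1 < (y + 2) * 2 ^ k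

/-- A machine with prefix-free domain. -/
def PrefixFree (T : ℕ →. ℕ) : Prop :=
  ∀ y z, (T y).Dom → (T z).Dom → IsPrefix y z → y = z

/-- `U` is an optimal prefix-free machine. -/
def PrefixOptimal (U : ℕ →. ℕ) : Prop :=
  Partrec U ∧ PrefixFree U ∧ ∀ T : ℕ →. ℕ, Partrec T → PrefixFree T →
    ∃ c, ∀ x y, x ∈ T y → MachineCplx U x ≤ len y + c

/-- Upper semicomputability: `A` is a pointwise limit of a computable
nonincreasing sequence of approximations. -/
def UpperSemicomputable (A : ℕ → ℕ) : Prop :=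
  ∃ F : ℕ → ℕ → ℕ, Computable₂ F ∧ (∀ x, Antitone (F x)) ∧ ∀ x, A x = ⨅ s, F x s

/-- Uniform upper semicomputability for a two-argument function. -/
def UpperSemicomputable₂ (B : ℕ → ℕ → ℕ) : Prop :=
  UpperSemicomputable (fun p => B (Nat.unpair p).1 (Nat.unpair p).2)

/-- Solovay's function `α` built from a complexity function `K`. -/
noncomputable def solovay (K : ℕ → ℕ) (n : ℕ) : ℕ := sInf {m | ∃ i, n < i ∧ K i = m}

/-- An order: total, non-decreasing, unbounded. -/
def IsOrder (h : ℕ → ℕ) : Prop := Monotone h ∧ ∀ m, ∃ n, m ≤ h n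

/-- Sub-linearity: `f n = o(n)`. -/
def Sublinear (f : ℕ → ℕ) : Prop :=
  Tendsto (fun n => (f n : ℝ) / n) atTop (nhds 0)

/-- `p_f = max {n | f n ≥ n}`. -/
noncomputable def pstar (f : ℕ → ℕ) : ℕ := sSup {n | n ≤ f n}

/-- The star-operator: `f* n = min {k | f^[k] n ≤ p_f}`. -/
noncomputable def starOp (f : ℕ → ℕ) (n : ℕ) : ℕ := sInf {k | f^[k] n ≤ pstar f}

end KC

open KC

/-- The order machine: on input `y` with `y + 3 = 2 ^ (m + 2)` it searches for the
least `i` with `m < h i`; it diverges on all other inputs. -/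
def orderMachine (h : ℕ → ℕ) : ℕ →. ℕ := fun y =>
  (Nat.rfind fun m => Part.some (decide (y + 3 = 2 ^ (m + 2)))).bind fun m =>
    Nat.rfind fun i => Part.some (decide (m < h i))

lemma pow_primrec : Primrec (fun i : ℕ => 2 ^ (i + 2)) := by
  have : Primrec (Nat.rec (motive := fun _ => ℕ) 4 (fun _ ih => ih + ih)) :=
    Primrec.nat_rec₁ 4 ((Primrec.nat_add.comp Primrec.snd Primrec.snd).to₂)
  refine this.of_eq fun i => ?_
  induction i with
  | zero => rfl
  | succ n ih => simp only [pow_succ] at *; omega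

lemma orderMachine_partrec {h : ℕ → ℕ} (hh : Computable h) :
    Partrec (orderMachine h) := by
  have c1 : Computable₂ fun (y m : ℕ) => decide (y + 3 = 2 ^ (m + 2)) :=
    (Primrec.eq.comp (Primrec.nat_add.comp Primrec.fst (Primrec.const 3))
      (pow_primrec.comp Primrec.snd)).decide.to₂.to_comp
  have c2 : Computable₂ fun (p : ℕ × ℕ) (i : ℕ) => decide (p.2 < h i) :=
    ((Primrec.nat_lt.decide.to_comp.comp (Computable.snd.comp Computable.fst)
      (hh.comp Computable.snd))).to₂
  have h1 : Partrec fun y : ℕ => Nat.rfind fun m => Part.some (decide (y + 3 = 2 ^ (m + 2))) :=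
    Partrec.rfind c1.partrec₂
  have h2 : Partrec₂ fun (y m : ℕ) => Nat.rfind fun i => Part.some (decide (m < h i)) :=
    Partrec.rfind c2.partrec₂
  exact h1.bind h2

lemma key_arith (y z a b k : ℕ) (hy : y + 3 = 2 ^ (a + 2)) (hz : z + 3 = 2 ^ (b + 2))
    (h1 : (y + 1) * 2 ^ k ≤ z + 1) (h2 : z + 1 < (y + 2) * 2 ^ k) : y = z := by
  have hy4 : 4 ≤ 2 ^ (a + 2) := by
    have : (2:ℕ) ^ 2 ≤ 2 ^ (a + 2) := Nat.pow_le_pow_right (by norm_num) (by omega)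
    simpa using this
  rcases Nat.eq_zero_or_pos k with rfl | hk
  · simp at h1 h2; omega
  exfalso
  rcases le_or_gt (b + 2) k with hbk | hbk
  · have hzk : z + 3 ≤ 2 ^ k := hz ▸ Nat.pow_le_pow_right (by norm_num) hbk
    have : 2 * (z + 3) ≤ (y + 1) * 2 ^ k := Nat.mul_le_mul (by omega) hzk
    omega
  · have he : 2 ^ (b + 2) = 2 ^ (b + 2 - k) * 2 ^ k := by
      rw [← pow_add]; congr 1; omega
    have hE2 : 2 ≤ 2 ^ (b + 2 - k) := by
      calc 2 = 2^1 := rfl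
      _ ≤ 2 ^ (b + 2 - k) := Nat.pow_le_pow_right (by norm_num) (by omega)
    have hEeven : 2 ∣ 2 ^ (b + 2 - k) := dvd_pow_self 2 (by omega)
    obtain ⟨D, hD⟩ : ∃ D, 2 ^ (b + 2 - k) = D + 1 := ⟨2 ^ (b+2-k) - 1, by omega⟩
    have hK2 : 2 ≤ 2 ^ k := by
      calc 2 = 2^1 := rfl
      _ ≤ 2 ^ k := Nat.pow_le_pow_right (by norm_num) hk
    have hzDK : z + 3 = D * 2 ^ k + 2 ^ k := by
      rw [hz, he, hD, add_mul, one_mul]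
    have l1 : (y + 1) * 2 ^ k < (D + 1) * 2 ^ k := by
      rw [show (D+1)*2^k = D*2^k + 2^k by ring]; omega
    have l2 : y + 1 ≤ D := by
      have := Nat.lt_of_mul_lt_mul_right l1; omega
    have l3 : D * 2 ^ k < (y + 2) * 2 ^ k := by omega
    have l4 : D ≤ y + 1 := by
      have := Nat.lt_of_mul_lt_mul_right l3; omega
    have hyeven : 2 ∣ y + 3 := hy ▸ dvd_pow_self 2 (by omega)
    omega

lemma orderMachine_dom {h : ℕ → ℕ} {y : ℕ} (hd : (orderMachine h y).Dom) :
    ∃ m, y + 3 = 2 ^ (m + 2) := by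
  rw [orderMachine, Part.bind_dom] at hd
  obtain ⟨hm, _⟩ := hd
  refine ⟨(Nat.rfind _).get hm, ?_⟩
  have := Nat.rfind_spec (Part.get_mem hm)
  simpa using this

lemma orderMachine_prefixFree (h : ℕ → ℕ) : PrefixFree (orderMachine h) := by
  intro y z hy hz hpre
  obtain ⟨a, ha⟩ := orderMachine_dom hy
  obtain ⟨b, hb⟩ := orderMachine_dom hz
  obtain ⟨k, h1, h2⟩ := hpre
  exact key_arith y z a b k ha hb h1 h2

lemma orderMachine_mem {h : ℕ → ℕ} (hunb : ∀ m, ∃ n, m ≤ h n) (m : ℕ) :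
    ∃ i, i ∈ orderMachine h (2 ^ (m + 2) - 3) ∧ m < h i := by
  have h4 : 4 ≤ 2 ^ (m + 2) := by
    calc 4 = 2^2 := rfl
    _ ≤ 2 ^ (m + 2) := Nat.pow_le_pow_right (by norm_num) (by omega)
  set y := 2 ^ (m + 2) - 3 with hy
  have hy3 : y + 3 = 2 ^ (m + 2) := by omega
  have hm : m ∈ Nat.rfind fun m' => Part.some (decide (y + 3 = 2 ^ (m' + 2))) := by
    refine Nat.mem_rfind.2 ?_
    constructor
    · simp [hy3]
    · intro k hk
      have : 2 ^ (k + 2) < 2 ^ (m + 2) := Nat.pow_lt_pow_right (by norm_num) (by omega)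
      simp only [Part.mem_some_iff, eq_comm (a := false), decide_eq_false_iff_not]
      omega
  obtain ⟨n0, hn0⟩ := hunb (m + 1)
  have hpm : (fun i => decide (m < h i)) n0 = true := by simp; omega
  obtain ⟨i, hi, -⟩ := Nat.rfind_min' (p := fun i => decide (m < h i)) hpm
  have hspec : m < h i := by simpa using Nat.rfind_spec hi
  exact ⟨i, Part.mem_bind_iff.2 ⟨m, hm, hi⟩, hspec⟩

/-- `α` grows more slowly (up to a constant) than every computable order. -/
theorem solovay_le_order (U' : ℕ →. ℕ) (hU' : PrefixOptimal U') :
    ∀ h : ℕ → ℕ, Computable h → IsOrder h →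
      ∃ c, ∀ n, solovay (MachineCplx U') n ≤ h n + c := by
  intro h hcomp hord
  obtain ⟨hmono, hunb⟩ := hord
  obtain ⟨c, hc⟩ := hU'.2.2 (orderMachine h) (orderMachine_partrec hcomp)
    (orderMachine_prefixFree h)
  refine ⟨c + 1, fun n => ?_⟩
  obtain ⟨i, hi, him⟩ := orderMachine_mem hunb (h n)
  have hni : n < i := by
    by_contra hle
    exact absurd (hmono (by omega : i ≤ n)) (by omega)
  have h4 : 4 ≤ 2 ^ (h n + 2) := by
    calc 4 = 2^2 := rfl
    _ ≤ 2 ^ (h n + 2) := Nat.pow_le_pow_right (by norm_num) (by omega)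
  have hlen : len (2 ^ (h n + 2) - 3) = h n + 1 := by
    obtain ⟨P, hP⟩ : ∃ P, 2 ^ (h n + 1) = P := ⟨_, rfl⟩
    have e1 : 2 ^ (h n + 2) = 2 * P := by rw [← hP]; ring
    have e2 : 2 ^ (h n + 1 + 1) = 2 * P := by rw [← hP]; ring
    have h2 : 2 ≤ P := by
      rw [← hP]
      calc 2 = 2^1 := rfl
      _ ≤ 2 ^ (h n + 1) := Nat.pow_le_pow_right (by norm_num) (by omega)
    unfold len
    refine Nat.log_eq_of_pow_le_of_lt_pow ?_ ?_
    · rw [hP, e1]; omega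
    · rw [e2]; omega
  have hK : MachineCplx U' i ≤ h n + 1 + c := by
    have := hc i _ hi
    rwa [hlen] at this
  calc solovay (MachineCplx U') n ≤ MachineCplx U' i := Nat.sInf_le ⟨i, hni, rfl⟩
  _ ≤ h n + (c + 1) := hK.trans (by omega)
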